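/- With notation as in the top-layer matrix: the A_r(v) × A_r(v) matrix P, with layers ordered by increasing |a| (and |b|), is block lower triangular with all diagonal blocks equal to (-1)^r times an identity matrix, and its only possible nonzero off-diagonal block is the corner block from layer |a| = U to layer |b| = L; consequently P is invertible, i.e. rank(P) = A_r(v). -/

import Mathlib

/-- The sum of the monomial with exponent vector `c` over the standard
representatives of the points of `ℙ^m(F)` (vectors whose first nonzero
coordinate equals `1`). -/
def projSum (F : Type*) [Field F] [Fintype F] [DecidableEq F] (m : ℕ)
    (c : Fin (m + 1) → ℕ) : F :=
  ∑ p ∈ Finset.univ.filter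
      (fun p : Fin (m + 1) → F => ∃ j, p j = 1 ∧ ∀ i, i < j → p i = 0),
    ∏ i, p i ^ c i

/-- The entry of the top-layer matrix at `(a, b)`: the projective inner product
`⟨ev(M_a), ev(M_{b̄})⟩` over `ℙ^r(F_q)`, where `M_a = z_0^{v-|a|} z_1^{a_1} ⋯ z_r^{a_r}`
and `b̄ = (Q - b_1, …, Q - b_r)`, `Q = q - 1`, `L = rQ - v`. -/
def topEntry (F : Type*) [Field F] [Fintype F] [DecidableEq F]
    (q r v : ℕ) (a b : Fin r → ℕ) : F :=
  projSum F r (fun i =>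
    (Fin.cons (v - ∑ j, a j) a : Fin (r + 1) → ℕ) i +
      (Fin.cons ((∑ j, b j) - (r * (q - 1) - v)) (fun j => (q - 1) - b j) :
        Fin (r + 1) → ℕ) i)

/-- The index set of the top layer: tuples `a ∈ {0,…,q-1}^r` with
`L ≤ |a| ≤ U`, where `L = r(q-1) - v` and `U = v`; its cardinality is `A_r(v)`. -/
def topIndex (q r v : ℕ) : Type :=
  {a : Fin r → Fin q // r * (q - 1) - v ≤ ∑ i, (a i : ℕ) ∧ ∑ i, (a i : ℕ) ≤ v}

instance (q r v : ℕ) : Fintype (topIndex q r v) := by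
  unfold topIndex; infer_instance

instance (q r v : ℕ) : DecidableEq (topIndex q r v) := by
  unfold topIndex; infer_instance

open Finset

/-! Arithmetic helper lemmas -/

private lemma arith1 (m v A B : ℕ) (hA : A ≤ v) (hB : m - v ≤ B)
    (h : ¬(A = v ∧ B = m - v)) : (v - A) + (B - (m - v)) ≠ 0 := by omega

private lemma arith2 (m Q v A B : ℕ) (h2 : 2 * v < m + Q) (hQm : Q ≤ m)
    (hAv : A ≤ v) (hBL : m - v ≤ B) (hBA : B + Q ≤ A) : False := by omega

private lemma arith3 (Q a b : ℕ) (ha : a ≤ Q) (hb : b ≤ Q)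
    (h0 : a + (Q - b) ≠ 0) (hd : Q ∣ a + (Q - b)) : a = b ∨ (a = Q ∧ b = 0) := by
  obtain ⟨t, ht⟩ := hd
  rcases Nat.lt_or_ge t 2 with h | h
  · interval_cases t <;> omega
  · have h2 : Q * 2 ≤ a + (Q - b) := ht ▸ Nat.mul_le_mul le_rfl h
    omega

/-- The power-sum over a finite field. -/
private lemma sum_pow_eval (F : Type*) [Field F] [Fintype F] [DecidableEq F] (n : ℕ) :
    ∑ x : F, x ^ n = if n ≠ 0 ∧ (Fintype.card F - 1) ∣ n then -1 else 0 := by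
  rcases eq_or_ne n 0 with rfl | hn
  · simp only [pow_zero, Finset.sum_const, Finset.card_univ, nsmul_eq_mul, mul_one]
    rw [if_neg (by simp)]
    exact FiniteField.cast_card_eq_zero F
  · let φ : Fˣ ↪ F := ⟨fun x => (x : F), fun _ _ h => Units.ext h⟩
    have hmap : (Finset.univ : Finset Fˣ).map φ = Finset.univ.erase 0 := by
      ext x
      simp only [Finset.mem_map, Finset.mem_univ, true_and, Finset.mem_erase,
        Function.Embedding.coeFn_mk, and_true, φ]
      constructor
      · rintro ⟨u, rfl⟩; exact u.ne_zero
      · intro hx; exact ⟨Units.mk0 x hx, rfl⟩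
    calc ∑ x : F, x ^ n = ∑ x ∈ Finset.univ.erase 0, x ^ n :=
          (Finset.sum_erase (s := (Finset.univ : Finset F)) (f := fun x => x ^ n)
            (zero_pow hn)).symm
      _ = ∑ x ∈ (Finset.univ : Finset Fˣ).map φ, x ^ n := by rw [hmap]
      _ = ∑ u : Fˣ, ((u : F)) ^ n := Finset.sum_map _ _ _
      _ = if (Fintype.card F - 1) ∣ n then -1 else 0 := FiniteField.sum_pow_units F n
      _ = if n ≠ 0 ∧ (Fintype.card F - 1) ∣ n then -1 else 0 := by simp [hn]

/-- Decomposition of `projSum` according to the position of the leading `1`. -/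
private lemma projSum_eq (F : Type*) [Field F] [Fintype F] [DecidableEq F] (m : ℕ)
    (c : Fin (m + 1) → ℕ) :
    projSum F m c = ∑ j : Fin (m + 1), ∏ i : Fin (m + 1),
      (if i < j then (0 : F) ^ c i else if i = j then 1 else ∑ x : F, x ^ c i) := by
  classical
  unfold projSum
  set t : Fin (m+1) → Fin (m+1) → Finset F := fun j i =>
    if i < j then ({0} : Finset F) else if i = j then {1} else Finset.univ with ht
  have hmem : ∀ (j : Fin (m+1)) (p : Fin (m+1) → F),
      p ∈ Fintype.piFinset (t j) ↔ (p j = 1 ∧ ∀ i, i < j → p i = 0) := by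
    intro j p
    rw [Fintype.mem_piFinset]
    constructor
    · intro h
      refine ⟨?_, fun i hi => ?_⟩
      · have := h j; simp only [ht, lt_irrefl, if_false, if_true, reduceIte] at this
        simpa using this
      · have := h i; simp only [ht, if_pos hi] at this; simpa using this
    · rintro ⟨h1, h0⟩ i
      rcases lt_trichotomy i j with h | h | h
      · simpa [ht, h] using h0 i h
      · subst h; simp [ht, h1]
      · simp [ht, not_lt_of_gt h, ne_of_gt h]
  have hset : (Finset.univ.filter
      (fun p : Fin (m + 1) → F => ∃ j, p j = 1 ∧ ∀ i, i < j → p i = 0)) =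
      Finset.univ.biUnion (fun j => Fintype.piFinset (t j)) := by
    ext p
    simp only [Finset.mem_filter, Finset.mem_univ, true_and, Finset.mem_biUnion]
    constructor
    · rintro ⟨j, hj⟩; exact ⟨j, (hmem j p).2 hj⟩
    · rintro ⟨j, hj⟩; exact ⟨j, (hmem j p).1 hj⟩
  rw [hset, Finset.sum_biUnion]
  · refine Finset.sum_congr rfl (fun j _ => ?_)
    rw [← Finset.prod_univ_sum (t j) (fun i x => x ^ c i)]
    refine Finset.prod_congr rfl (fun i _ => ?_)
    rcases lt_trichotomy i j with h | h | h
    · simp [ht, h, (ne_of_lt h)]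
    · subst h; simp [ht]
    · simp [ht, not_lt_of_gt h, ne_of_gt h]
  · intro j _ j' _ hne
    simp only [Function.onFun]
    rw [Finset.disjoint_left]
    intro p hp hp'
    replace hp := (hmem _ _).1 hp
    replace hp' := (hmem _ _).1 hp'
    rcases Ne.lt_or_gt hne with h | h
    · exact one_ne_zero (hp.1 ▸ hp'.2 j h)
    · exact one_ne_zero (hp'.1 ▸ hp.2 j' h)

/-- If the `0`-th exponent is nonzero, only the leading term `j = 0` survives. -/
private lemma topEntry_eq_of (F : Type*) [Field F] [Fintype F] [DecidableEq F]
    (q r v : ℕ) (a b : Fin r → ℕ)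
    (hc0 : (v - ∑ j, a j) + ((∑ j, b j) - (r * (q - 1) - v)) ≠ 0) :
    topEntry F q r v a b = ∏ k : Fin r, ∑ x : F, x ^ (a k + ((q - 1) - b k)) := by
  unfold topEntry
  rw [projSum_eq]
  rw [Finset.sum_eq_single (0 : Fin (r + 1))]
  · rw [Fin.prod_univ_succ]
    simp [Fin.succ_ne_zero, Fin.cons_succ]
  · intro j _ hj
    apply Finset.prod_eq_zero (Finset.mem_univ (0 : Fin (r + 1)))
    rw [if_pos (Fin.pos_of_ne_zero hj)]
    simp only [Fin.cons_zero]
    exact zero_pow hc0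
  · intro h; exact absurd (Finset.mem_univ _) h

private lemma arith0 (m v A : ℕ) (h : m < 2 * v) (hL : m - v ≤ A) (hU : A ≤ v) :
    (v - A) + (A - (m - v)) ≠ 0 := by omega

private lemma arith4 (m v S : ℕ) (h : m < 2 * v) (ha : S = m - v) (hb : S = v) : False := by
  omega

/-- The top-layer matrix `P`, with entries `⟨ev(M_a), ev(M_{b̄})⟩`, is invertible:
its diagonal entries are `(-1)^r`, its only possible nonzero off-diagonal entries
lie in the corner block from the layer `|a| = U` to the layer `|b| = L`, and
its rank equals `A_r(v)`, the size of the top layer. -/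
theorem topMatrix_invertible (F : Type*) [Field F] [Fintype F] [DecidableEq F]
    (q r v : ℕ) (hq : Fintype.card F = q) (hr : 1 ≤ r)
    (h1 : r * (q - 1) < 2 * v) (h2 : 2 * v < (r + 1) * (q - 1)) :
    (∀ x : topIndex q r v,
        (fun x y : topIndex q r v =>
          topEntry F q r v (fun i => (x.1 i : ℕ)) (fun i => (y.1 i : ℕ))) x x
          = (-1 : F) ^ r) ∧
    (∀ x y : topIndex q r v, x ≠ y →
        (fun x y : topIndex q r v =>
          topEntry F q r v (fun i => (x.1 i : ℕ)) (fun i => (y.1 i : ℕ))) x y ≠ 0 →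
        ∑ i, (x.1 i : ℕ) = v ∧ ∑ i, (y.1 i : ℕ) = r * (q - 1) - v) ∧
    IsUnit (Matrix.of (fun x y : topIndex q r v =>
        topEntry F q r v (fun i => (x.1 i : ℕ)) (fun i => (y.1 i : ℕ)))) ∧
    (Matrix.of (fun x y : topIndex q r v =>
        topEntry F q r v (fun i => (x.1 i : ℕ)) (fun i => (y.1 i : ℕ)))).rank =
      Fintype.card (topIndex q r v) := by
  classical
  have hq2 : 1 < q := hq ▸ Fintype.one_lt_card
  have hQle : q - 1 ≤ r * (q - 1) := Nat.le_mul_of_pos_left _ hr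
  have h2' := h2
  rw [add_one_mul] at h2'
  -- diagonal entries
  have hdiag : ∀ x : topIndex q r v,
      topEntry F q r v (fun i => (x.1 i : ℕ)) (fun i => (x.1 i : ℕ)) = (-1 : F) ^ r := by
    intro x
    obtain ⟨hL, hU⟩ := x.2
    rw [topEntry_eq_of F q r v _ _ (arith0 _ _ _ h1 hL hU)]
    have hconst : ∀ k : Fin r,
        (∑ t : F, t ^ ((x.1 k : ℕ) + ((q - 1) - (x.1 k : ℕ)))) = -1 := by
      intro k
      have hb : (x.1 k : ℕ) ≤ q - 1 := by have := (x.1 k).isLt; omega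
      have he : (x.1 k : ℕ) + ((q - 1) - (x.1 k : ℕ)) = q - 1 := by omega
      rw [he, sum_pow_eval, hq, if_pos ⟨by omega, dvd_rfl⟩]
    rw [Finset.prod_congr rfl (fun k _ => hconst k), Finset.prod_const]
    simp
  -- off-diagonal entries
  have hoff : ∀ x y : topIndex q r v, x ≠ y →
      topEntry F q r v (fun i => (x.1 i : ℕ)) (fun i => (y.1 i : ℕ)) ≠ 0 →
      (∑ i, (x.1 i : ℕ)) = v ∧ (∑ i, (y.1 i : ℕ)) = r * (q - 1) - v := by
    intro x y hxy hne
    by_contra hcon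
    obtain ⟨hLx, hUx⟩ := x.2
    obtain ⟨hLy, hUy⟩ := y.2
    rw [topEntry_eq_of F q r v _ _ (arith1 _ _ _ _ hUx hLy hcon)] at hne
    have hfac := Finset.prod_ne_zero_iff.mp hne
    have hk : ∀ k : Fin r,
        ((x.1 k : ℕ) = (y.1 k : ℕ)) ∨ ((x.1 k : ℕ) = q - 1 ∧ (y.1 k : ℕ) = 0) := by
      intro k
      have h := hfac k (Finset.mem_univ k)
      rw [sum_pow_eval, hq] at h
      by_cases hcond : ((x.1 k : ℕ) + ((q - 1) - (y.1 k : ℕ)) ≠ 0 ∧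
          (q - 1) ∣ (x.1 k : ℕ) + ((q - 1) - (y.1 k : ℕ)))
      · exact arith3 (q - 1) _ _ (by have := (x.1 k).isLt; omega)
          (by have := (y.1 k).isLt; omega) hcond.1 hcond.2
      · rw [if_neg hcond] at h; exact absurd rfl h
    have hxy1 : ∃ k, (x.1 k : ℕ) ≠ (y.1 k : ℕ) := by
      by_contra hall
      push_neg at hall
      exact hxy (Subtype.ext (funext fun k => Fin.ext (hall k)))
    obtain ⟨k0, hk0⟩ := hxy1
    obtain ⟨hQx, hQy⟩ := (hk k0).resolve_left hk0
    have hle : ∀ k, (y.1 k : ℕ) ≤ (x.1 k : ℕ) := by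
      intro k; rcases hk k with h | ⟨ha, hb⟩ <;> omega
    have hsum : (∑ i, (y.1 i : ℕ)) + (q - 1) ≤ ∑ i, (x.1 i : ℕ) := by
      rw [← Finset.add_sum_erase _ (fun i => ((y.1 i : ℕ))) (Finset.mem_univ k0),
        ← Finset.add_sum_erase _ (fun i => ((x.1 i : ℕ))) (Finset.mem_univ k0)]
      have hrest : ∑ i ∈ Finset.univ.erase k0, (y.1 i : ℕ) ≤
          ∑ i ∈ Finset.univ.erase k0, (x.1 i : ℕ) :=
        Finset.sum_le_sum (fun i _ => hle i)
      omega
    exact arith2 (r * (q - 1)) (q - 1) v _ _ h2' hQle hUx hLy hsum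
  refine ⟨fun x => hdiag x, fun x y h hne => hoff x y h hne, ?_⟩
  set M : Matrix (topIndex q r v) (topIndex q r v) F :=
    Matrix.of (fun x y : topIndex q r v =>
      topEntry F q r v (fun i => (x.1 i : ℕ)) (fun i => (y.1 i : ℕ))) with hMdef
  set N : Matrix (topIndex q r v) (topIndex q r v) F :=
    M - ((-1 : F) ^ r) • 1 with hNdef
  have hNd : ∀ x, N x x = 0 := by
    intro x
    have hx : M x x = (-1 : F) ^ r := hdiag x
    simp [hNdef, Matrix.sub_apply, Matrix.smul_apply, Matrix.one_apply_eq, hx]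
  have hNo : ∀ x y, x ≠ y → N x y ≠ 0 →
      (∑ i, (x.1 i : ℕ)) = v ∧ (∑ i, (y.1 i : ℕ)) = r * (q - 1) - v := by
    intro x y hxy h
    have hNM : N x y = M x y := by
      simp [hNdef, Matrix.sub_apply, Matrix.smul_apply, Matrix.one_apply_ne hxy]
    rw [hNM] at h
    exact hoff x y hxy h
  have hN2 : N * N = 0 := by
    ext x z
    rw [Matrix.mul_apply, Matrix.zero_apply]
    refine Finset.sum_eq_zero (fun y _ => ?_)
    by_cases hz1 : N x y = 0
    · rw [hz1, zero_mul]
    by_cases hz2 : N y z = 0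
    · rw [hz2, mul_zero]
    exfalso
    have hxy : x ≠ y := by rintro rfl; exact hz1 (hNd x)
    have hyz : y ≠ z := by rintro rfl; exact hz2 (hNd y)
    exact arith4 (r * (q - 1)) v _ h1 (hNo x y hxy hz1).2 (hNo y z hyz hz2).1
  have hε : ((-1 : F) ^ r) * ((-1 : F) ^ r) = 1 := by
    rw [← pow_add]; exact Even.neg_one_pow ⟨r, rfl⟩
  have hMN : M = ((-1 : F) ^ r) • 1 + N := by rw [hNdef]; abel
  have hMM' : M * (((-1 : F) ^ r) • 1 - N) = 1 := by
    have hcalc : M * (((-1 : F) ^ r) • 1 - N) =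
        (((-1 : F) ^ r) * ((-1 : F) ^ r)) • (1 : Matrix (topIndex q r v) (topIndex q r v) F)
          - N * N := by
      rw [hMN]
      simp only [add_mul, mul_sub, Matrix.smul_mul, Matrix.mul_smul, one_mul, mul_one,
        smul_smul]
      abel
    rw [hcalc, hN2, hε, one_smul, sub_zero]
  have hM'M : (((-1 : F) ^ r) • 1 - N) * M = 1 := by
    have hcalc : (((-1 : F) ^ r) • 1 - N) * M =
        (((-1 : F) ^ r) * ((-1 : F) ^ r)) • (1 : Matrix (topIndex q r v) (topIndex q r v) F)
          - N * N := by
      rw [hMN]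
      simp only [mul_add, sub_mul, Matrix.smul_mul, Matrix.mul_smul, one_mul, mul_one,
        smul_smul]
      abel
    rw [hcalc, hN2, hε, one_smul, sub_zero]
  have hunit : IsUnit M := ⟨⟨M, _, hMM', hM'M⟩, rfl⟩
  exact ⟨hunit, Matrix.rank_of_isUnit M hunit⟩
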